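/- Let T be a subring of R and let U be a filter in the Boolean algebra B. Then (U)^T = {a ∈ T | S(a) ∈ U} is an ideal of T. If moreover U is an ultrafilter in B, then (U)^T is a prime ideal of T. -/

import Mathlib

/-!
Common setup: `Λ` is an index set, `D λ` a family of commutative rings,
`R = ∏ λ, D λ` the product ring, and
`B = ∏ λ, P(max (D λ))` the product Boolean algebra of the power sets of the
sets of maximal ideals, realized as the Pi type `∀ l, Set (MaximalSpectrum (D l))`
with its componentwise Boolean algebra structure (meet = componentwise ∩,
join = componentwise ∪, `⊥ = (∅)_λ`, complement componentwise, order = componentwise ⊆).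
-/

variable {Λ : Type*} {D : Λ → Type*}

/-- `S(a) = (V(a_λ))_λ ∈ B`, where `V(x)` is the set of maximal ideals containing `x`. -/
def SFam [∀ l, CommRing (D l)] (a : ∀ l, D l) : ∀ l, Set (MaximalSpectrum (D l)) :=
  fun l => {P | a l ∈ P.asIdeal}

/-- `z(x) = {λ | x_λ = 0}`. -/
def ZFam [∀ l, CommRing (D l)] (x : ∀ l, D l) : Set Λ := {l | x l = 0}

/-- A filter in a Boolean algebra: a nonempty subset not containing `⊥`, closed
under meets, and upward closed. -/
def IsBFilter {B : Type*} [BooleanAlgebra B] (U : Set B) : Prop :=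
  U.Nonempty ∧ ⊥ ∉ U ∧ (∀ X ∈ U, ∀ Y ∈ U, X ⊓ Y ∈ U) ∧ (∀ Y ∈ U, ∀ Z, Y ≤ Z → Z ∈ U)

/-- An ultrafilter in a Boolean algebra: a filter containing `Y` or `Yᶜ` for every `Y`. -/
def IsBUltrafilter {B : Type*} [BooleanAlgebra B] (U : Set B) : Prop :=
  IsBFilter U ∧ ∀ Y, Y ∈ U ∨ Yᶜ ∈ U

/-- Property (+): for all `r` and all nonzero `a` there is `d` lying in every maximal
ideal containing `a` but not `r`, and in no maximal ideal containing `r`. -/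
def PropertyPlus (A : Type*) [CommRing A] : Prop :=
  ∀ r a : A, a ≠ 0 → ∃ d : A,
    (∀ M : Ideal A, M.IsMaximal → a ∈ M → r ∉ M → d ∈ M) ∧
    (∀ M : Ideal A, M.IsMaximal → r ∈ M → d ∉ M)

/-- Property (++): for every `r` there is `d` with `D(r) = V(d)`, i.e. the maximal
ideals containing `d` are exactly those not containing `r`. -/
def PropertyPlusPlus (A : Type*) [CommRing A] : Prop :=
  ∀ r : A, ∃ d : A, ∀ P : MaximalSpectrum A, d ∈ P.asIdeal ↔ r ∉ P.asIdeal

/-- For a subring `T` of `R` and a filter `U` in `B`, the set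
`(U)^T = {a ∈ T | S(a) ∈ U}` is an ideal of `T`; if moreover `U` is an ultrafilter
in `B`, it is a prime ideal of `T`. -/
theorem stmt_0 [∀ l, CommRing (D l)] [∀ l, Nontrivial (D l)]
    (T : Subring (∀ l, D l)) (U : Set (∀ l, Set (MaximalSpectrum (D l))))
    (hU : IsBFilter U) :
    ∃ I : Ideal T, (∀ a : T, a ∈ I ↔ SFam (a : ∀ l, D l) ∈ U) ∧
      (IsBUltrafilter U → I.IsPrime) := by
  obtain ⟨⟨Y0, hY0⟩, hbot, hmeet, hup⟩ := hU
  have htop : (⊤ : ∀ l, Set (MaximalSpectrum (D l))) ∈ U := hup Y0 hY0 ⊤ le_top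
  refine ⟨{ carrier := {a : T | SFam (a : ∀ l, D l) ∈ U}
            zero_mem' := ?_
            add_mem' := ?_
            smul_mem' := ?_ }, fun a => Iff.rfl, ?_⟩
  · intro a b ha hb
    refine hup _ (hmeet _ ha _ hb) _ fun l P hP => ?_
    exact P.asIdeal.add_mem hP.1 hP.2
  · have h0 : SFam ((0 : T) : ∀ l, D l) = ⊤ := by
      funext l; ext P
      simp [SFam]
    show SFam ((0 : T) : ∀ l, D l) ∈ U
    rw [h0]; exact htop
  · intro c a ha
    refine hup _ ha _ fun l P hP => ?_
    exact Ideal.mul_mem_left _ _ hP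
  · rintro ⟨-, hultra⟩
    constructor
    · intro h1
      have : SFam ((1 : T) : ∀ l, D l) ∈ U := (Ideal.eq_top_iff_one _).1 h1
      have hb : SFam ((1 : T) : ∀ l, D l) = ⊥ := by
        funext l; ext P
        simpa [SFam] using P.isMaximal.ne_top ∘ (Ideal.eq_top_iff_one _).2
      exact hbot (hb ▸ this)
    · intro a b hab
      by_contra h
      push_neg at h
      obtain ⟨ha, hb⟩ := h
      have hc : (SFam ((a : T) : ∀ l, D l))ᶜ ∈ U := (hultra _).resolve_left ha
      have hsup : SFam ((a * b : T) : ∀ l, D l)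
          = SFam ((a : T) : ∀ l, D l) ⊔ SFam ((b : T) : ∀ l, D l) := by
        funext l; ext P
        have := P.isMaximal.isPrime
        constructor
        · intro h
          exact (this.mem_or_mem h).imp id id
        · rintro (h | h)
          · exact Ideal.mul_mem_right _ _ h
          · exact Ideal.mul_mem_left _ _ h
      have hmem : (SFam ((a : T) : ∀ l, D l))ᶜ ⊓ SFam ((a * b : T) : ∀ l, D l) ∈ U :=
        hmeet _ hc _ hab
      refine hb (hup _ hmem _ ?_)
      rw [hsup, inf_sup_left]
      simp
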